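/- Let X be a Banach lattice admitting a positively homogeneous continuous function calculus, and let h ∈ ℋ_m for some m ∈ ℕ. Then the map from X^m to X defined by (x_1,…,x_m) ↦ h(x_1,…,x_m) is continuous with respect to the norm ‖(x_1,…,x_m)‖ = max_{1≤j≤m} ‖x_j‖ on X^m. -/

import Mathlib

set_option linter.unusedSectionVars false

/-- A function `h : ℝ^m → ℝ` belongs to `ℋ_m` iff it is continuous and positively
homogeneous. -/
def IsPHC {m : ℕ} (h : (Fin m → ℝ) → ℝ) : Prop :=
  Continuous h ∧ ∀ (c : ℝ), 0 ≤ c → ∀ t : Fin m → ℝ, h (c • t) = c * h t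

namespace FCAux

inductive LatP (m : ℕ) : ((Fin m → ℝ) → ℝ) → Prop
  | proj (k : Fin m) : LatP m (fun t => t k)
  | add {p q} : LatP m p → LatP m q → LatP m (p + q)
  | smul (c : ℝ) {p} : LatP m p → LatP m (c • p)
  | sup {p q} : LatP m p → LatP m q → LatP m (p ⊔ q)

lemma latp_congr {m} {p q : (Fin m → ℝ) → ℝ} (hp : LatP m p) (e : ∀ t, p t = q t) :
    LatP m q := (funext e) ▸ hp

lemma isPHC_proj {m} (k : Fin m) : IsPHC (fun t : Fin m → ℝ => t k) :=
  ⟨continuous_apply k, fun c _ t => by simp⟩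

lemma isPHC_add {m} {p q : (Fin m → ℝ) → ℝ} (hp : IsPHC p) (hq : IsPHC q) :
    IsPHC (p + q) :=
  ⟨hp.1.add hq.1, fun c hc t => by
    simp only [Pi.add_apply, hp.2 c hc t, hq.2 c hc t]; ring⟩

lemma isPHC_smul {m} (c : ℝ) {p : (Fin m → ℝ) → ℝ} (hp : IsPHC p) :
    IsPHC (c • p) :=
  ⟨hp.1.const_smul c, fun d hd t => by
    simp only [Pi.smul_apply, smul_eq_mul, hp.2 d hd t]; ring⟩

lemma isPHC_sup {m} {p q : (Fin m → ℝ) → ℝ} (hp : IsPHC p) (hq : IsPHC q) :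
    IsPHC (p ⊔ q) :=
  ⟨hp.1.max hq.1, fun c hc t => by
    simp only [Pi.sup_apply, hp.2 c hc t, hq.2 c hc t]
    exact (mul_max_of_nonneg _ _ hc).symm⟩

lemma isPHC_zero {m} : IsPHC (0 : (Fin m → ℝ) → ℝ) :=
  ⟨continuous_const, fun c _ t => by simp⟩

lemma LatP.isPHC {m} {p : (Fin m → ℝ) → ℝ} (hp : LatP m p) : IsPHC p := by
  induction hp with
  | proj k => exact isPHC_proj k
  | add _ _ ih1 ih2 => exact isPHC_add ih1 ih2
  | smul c _ ih => exact isPHC_smul c ih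
  | sup _ _ ih1 ih2 => exact isPHC_sup ih1 ih2

lemma latp_abs_proj {m} (k : Fin m) : LatP m (fun t => |t k|) := by
  refine latp_congr ((LatP.proj k).sup ((LatP.proj k).smul (-1))) fun t => ?_
  simp [Pi.sup_apply, abs_eq_max_neg]

lemma latp_sum_abs {m} {s : Finset (Fin m)} (hs : s.Nonempty) :
    LatP m (fun t => ∑ j ∈ s, |t j|) := by
  induction hs using Finset.Nonempty.cons_induction with
  | singleton a => exact latp_congr (latp_abs_proj a) fun t => by simp
  | cons a s ha hs ih =>
      refine latp_congr ((latp_abs_proj a).add ih) fun t => ?_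
      rw [Finset.sum_cons]; rfl

end FCAux

namespace FCAux

section Phi
variable {X : Type*} [NormedAddCommGroup X] [Lattice X] [HasSolidNorm X] [IsOrderedAddMonoid X]
  [NormedSpace ℝ X]
  (Φ : ∀ m : ℕ, (Fin m → X) → ((Fin m → ℝ) → ℝ) → X)
  (hΦadd : ∀ (m) (x : Fin m → X) (h g), IsPHC h → IsPHC g →
    Φ m x (h + g) = Φ m x h + Φ m x g)
  (hΦsmul : ∀ (m) (x : Fin m → X) (c : ℝ) (h), IsPHC h → Φ m x (c • h) = c • Φ m x h)
  (hΦsup : ∀ (m) (x : Fin m → X) (h g), IsPHC h → IsPHC g →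
    Φ m x (h ⊔ g) = Φ m x h ⊔ Φ m x g)
  (hΦproj : ∀ (m) (x : Fin m → X) (k : Fin m), Φ m x (fun t => t k) = x k)

include hΦsup in
lemma Φ_mono {m} (x : Fin m → X) {p q} (hp : IsPHC p) (hq : IsPHC q)
    (hpq : ∀ t, p t ≤ q t) : Φ m x p ≤ Φ m x q := by
  have hsupq : p ⊔ q = q := funext fun t => sup_eq_right.mpr (hpq t)
  have h1 := hΦsup m x p q hp hq
  rw [hsupq] at h1
  calc Φ m x p ≤ Φ m x p ⊔ Φ m x q := le_sup_left
    _ = Φ m x q := h1.symm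

include hΦadd hΦsmul in
lemma Φ_sub {m} (x : Fin m → X) {p q} (hp : IsPHC p) (hq : IsPHC q) :
    Φ m x (p + (-1 : ℝ) • q) = Φ m x p - Φ m x q := by
  rw [hΦadd m x p ((-1 : ℝ) • q) hp (isPHC_smul _ hq), hΦsmul m x (-1) q hq,
    neg_one_smul, sub_eq_add_neg]

include hΦsmul hΦsup in
lemma Φ_norm_le {m} (x : Fin m → X) {p q} (hp : IsPHC p) (hq : IsPHC q)
    (hpq : ∀ t, |p t| ≤ q t) : ‖Φ m x p‖ ≤ ‖Φ m x q‖ := by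
  have h1 : Φ m x p ≤ Φ m x q :=
    Φ_mono Φ hΦsup x hp hq fun t => (abs_le.mp (hpq t)).2
  have h2 : Φ m x ((-1 : ℝ) • q) ≤ Φ m x p := by
    refine Φ_mono Φ hΦsup x (isPHC_smul _ hq) hp fun t => ?_
    have := (abs_le.mp (hpq t)).1
    simpa using this
  rw [hΦsmul m x (-1) q hq, neg_one_smul] at h2
  have habs : |Φ m x p| ≤ Φ m x q := abs_le'.mpr ⟨h1, neg_le.mp h2⟩
  exact HasSolidNorm.solid (habs.trans (le_abs_self _))

include hΦadd hΦsmul hΦsup hΦproj in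
lemma Φ_latp_cont {m} {p} (hp : LatP m p) :
    Continuous fun x : Fin m → X => Φ m x p := by
  induction hp with
  | proj k => exact (continuous_apply k).congr fun x => (hΦproj m x k).symm
  | add h1 h2 ih1 ih2 =>
      exact (ih1.add ih2).congr fun x => (hΦadd m x _ _ h1.isPHC h2.isPHC).symm
  | smul c h1 ih =>
      exact (ih.const_smul c).congr fun x => (hΦsmul m x c _ h1.isPHC).symm
  | sup h1 h2 ih1 ih2 =>
      exact (ih1.sup ih2).congr fun x => (hΦsup m x _ _ h1.isPHC h2.isPHC).symm

include hΦsmul hΦsup hΦproj in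
lemma Φ_abs {m} (x : Fin m → X) (k : Fin m) :
    Φ m x (fun t => |t k|) = |x k| := by
  have e : (fun t : Fin m → ℝ => |t k|)
      = (fun t : Fin m → ℝ => t k) ⊔ ((-1 : ℝ) • fun t : Fin m → ℝ => t k) :=
    funext fun t => by simp [Pi.sup_apply, abs_eq_max_neg]
  rw [e, hΦsup m x _ _ (isPHC_proj k) (isPHC_smul _ (isPHC_proj k)),
    hΦsmul m x (-1) _ (isPHC_proj k), hΦproj, neg_one_smul]
  rfl

include hΦadd hΦsmul hΦsup hΦproj in
lemma Φ_sum_abs {m} (x : Fin m → X) {s : Finset (Fin m)} (hs : s.Nonempty) :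
    Φ m x (fun t => ∑ j ∈ s, |t j|) = ∑ j ∈ s, |x j| := by
  induction hs using Finset.Nonempty.cons_induction with
  | singleton a =>
      have e : (fun t : Fin m → ℝ => ∑ j ∈ {a}, |t j|) = fun t => |t a| :=
        funext fun t => by simp
      rw [e, Φ_abs Φ hΦsmul hΦsup hΦproj, Finset.sum_singleton]
  | cons a s ha hs ih =>
      have e : (fun t : Fin m → ℝ => ∑ j ∈ Finset.cons a s ha, |t j|)
          = (fun t => |t a|) + fun t => ∑ j ∈ s, |t j| :=
        funext fun t => by rw [Finset.sum_cons]; rfl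
      rw [e, hΦadd m x _ _ (latp_abs_proj a).isPHC (latp_sum_abs hs).isPHC,
        Φ_abs Φ hΦsmul hΦsup hΦproj, ih, Finset.sum_cons]

end Phi
end FCAux

namespace FCAux

lemma sigma_continuous {m : ℕ} : Continuous fun t : Fin m → ℝ => ∑ j, |t j| :=
  continuous_finset_sum _ fun j _ => (continuous_apply j).abs

lemma approx {m : ℕ} (hm : 0 < m) (h : (Fin m → ℝ) → ℝ) (hh : IsPHC h)
    {ε : ℝ} (hε : 0 < ε) :
    ∃ p, LatP m p ∧ ∀ t, |h t - p t| ≤ ε * ∑ j, |t j| := by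
  classical
  haveI : NeZero m := ⟨hm.ne'⟩
  set σ : (Fin m → ℝ) → ℝ := fun t => ∑ j, |t j| with hσdef
  have hσlat : LatP m σ := latp_sum_abs Finset.univ_nonempty
  have hσphc : IsPHC σ := hσlat.isPHC
  have hσnonneg : ∀ t, 0 ≤ σ t := fun t => Finset.sum_nonneg fun j _ => abs_nonneg _
  set K : Set (Fin m → ℝ) := {t | σ t = 1} with hKdef
  have hKcompact : IsCompact K := by
    refine Metric.isCompact_of_isClosed_isBounded (isClosed_eq sigma_continuous continuous_const) ?_
    refine (Metric.isBounded_iff_subset_closedBall 0).mpr ⟨1, fun t ht => ?_⟩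
    have ht1 : σ t = 1 := ht
    rw [Metric.mem_closedBall, dist_zero_right]
    refine pi_norm_le_iff_of_nonneg zero_le_one |>.mpr fun i => ?_
    calc ‖t i‖ = |t i| := rfl
      _ ≤ σ t := Finset.single_le_sum (fun j _ => abs_nonneg (t j)) (Finset.mem_univ i)
      _ = 1 := ht1
  haveI : CompactSpace K := isCompact_iff_compactSpace.mp hKcompact
  set L : Set C(K, ℝ) := {f | ∃ p, LatP m p ∧ ∀ z : K, f z = p (z : Fin m → ℝ)} with hLdef
  -- basic membership constructor
  have hmem : ∀ (p : (Fin m → ℝ) → ℝ) (hp : LatP m p),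
      (⟨fun z => p (z : Fin m → ℝ), hp.isPHC.1.comp continuous_subtype_val⟩ : C(K, ℝ)) ∈ L :=
    fun p hp => ⟨p, hp, fun _ => rfl⟩
  have hLne : L.Nonempty := ⟨_, hmem _ hσlat⟩
  have hinf : ∀ f ∈ L, ∀ g ∈ L, f ⊓ g ∈ L := by
    rintro f ⟨p, hp, hfp⟩ g ⟨q, hq, hgq⟩
    refine ⟨(-1 : ℝ) • (((-1 : ℝ) • p) ⊔ ((-1 : ℝ) • q)), ((hp.smul _).sup (hq.smul _)).smul _,
      fun z => ?_⟩
    show f z ⊓ g z = _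
    rw [hfp z, hgq z]
    simp only [Pi.smul_apply, Pi.sup_apply, smul_eq_mul, neg_one_mul, neg_sup, neg_neg]
  have hsup : ∀ f ∈ L, ∀ g ∈ L, f ⊔ g ∈ L := by
    rintro f ⟨p, hp, hfp⟩ g ⟨q, hq, hgq⟩
    exact ⟨p ⊔ q, hp.sup hq, fun z => by simp [hfp z, hgq z]⟩
  have hsep : (L : Set C(K, ℝ)).SeparatesPointsStrongly := by
    intro v x y
    by_cases hxy : (x : Fin m → ℝ) = (y : Fin m → ℝ)
    · have : x = y := Subtype.ext hxy
      subst this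
      refine ⟨_, hmem _ (hσlat.smul (v x)), ?_, ?_⟩ <;>
        · show v x * σ _ = _
          rw [show σ (x : Fin m → ℝ) = 1 from x.2, mul_one]
    · obtain ⟨j, hj⟩ : ∃ j, (x : Fin m → ℝ) j ≠ (y : Fin m → ℝ) j := by
        by_contra hcon
        push_neg at hcon
        exact hxy (funext hcon)
      set d : ℝ := (x : Fin m → ℝ) j - (y : Fin m → ℝ) j with hd
      have hd0 : d ≠ 0 := sub_ne_zero.mpr hj
      set α : ℝ := (v x - v y) / d with hα
      set β : ℝ := v x - α * (x : Fin m → ℝ) j with hβ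
      refine ⟨_, hmem (α • (fun t : Fin m → ℝ => t j) + β • σ) (((LatP.proj j).smul α).add (hσlat.smul β)),
        ?_, ?_⟩
      · show α * (x : Fin m → ℝ) j + β * σ (x : Fin m → ℝ) = v x
        rw [show σ (x : Fin m → ℝ) = 1 from x.2, mul_one, hβ]; ring
      · show α * (y : Fin m → ℝ) j + β * σ (y : Fin m → ℝ) = v y
        rw [show σ (y : Fin m → ℝ) = 1 from y.2, mul_one, hβ, hα]
        field_simp
        ring
  have hdense := ContinuousMap.sublattice_closure_eq_top L hLne hinf hsup hsep
  -- approximate h on K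
  set hK : C(K, ℝ) := ⟨fun z => h (z : Fin m → ℝ), hh.1.comp continuous_subtype_val⟩
  have hmemcl : hK ∈ closure L := by rw [hdense]; trivial
  obtain ⟨g, hgL, hgdist⟩ := Metric.mem_closure_iff.mp hmemcl ε hε
  obtain ⟨p, hpLat, hgp⟩ := hgL
  refine ⟨p, hpLat, fun t => ?_⟩
  rcases eq_or_lt_of_le (hσnonneg t) with h0 | hpos
  · -- σ t = 0 : then t = 0
    have ht0 : t = 0 := by
      funext j
      have := (Finset.sum_eq_zero_iff_of_nonneg (fun j _ => abs_nonneg (t j))).mp h0.symm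
        j (Finset.mem_univ j)
      simpa using this
    have hh0 : h 0 = 0 := by
      have := hh.2 0 le_rfl 0
      simpa using this
    have hp0 : p 0 = 0 := by
      have := hpLat.isPHC.2 0 le_rfl 0
      simpa using this
    rw [ht0, hh0, hp0]
    simpa using mul_nonneg hε.le (hσnonneg 0)
  · set c : ℝ := σ t with hc
    have hz : σ (c⁻¹ • t) = 1 := by
      rw [hσphc.2 c⁻¹ (inv_nonneg.mpr hpos.le) t, ← hc, inv_mul_cancel₀ hpos.ne']
    set z : K := ⟨c⁻¹ • t, hz⟩
    have hct : c • (z : Fin m → ℝ) = t := smul_inv_smul₀ hpos.ne' t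
    have hdistz : |h (z : Fin m → ℝ) - p (z : Fin m → ℝ)| ≤ ε := by
      have h1 : dist (hK z) (g z) ≤ dist hK g := ContinuousMap.dist_apply_le_dist z
      rw [hgp z] at h1
      have : dist (h (z : Fin m → ℝ)) (p (z : Fin m → ℝ)) ≤ dist hK g := h1
      rw [Real.dist_eq] at this
      exact this.trans hgdist.le
    calc |h t - p t| = |h (c • (z : Fin m → ℝ)) - p (c • (z : Fin m → ℝ))| := by rw [hct]
      _ = c * |h (z : Fin m → ℝ) - p (z : Fin m → ℝ)| := by
          rw [hh.2 c hpos.le, hpLat.isPHC.2 c hpos.le, ← mul_sub, abs_mul,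
            abs_of_pos hpos]
      _ ≤ c * ε := mul_le_mul_of_nonneg_left hdistz hpos.le
      _ = ε * σ t := by rw [mul_comm, hc]

end FCAux

open FCAux in
/-- Let `X` be a Banach lattice admitting a positively homogeneous
continuous function calculus `Φ`, and let `h ∈ ℋ_m`. Then the map
`(x_1,…,x_m) ↦ h(x_1,…,x_m)` from `X^m` to `X` is continuous with respect to the norm
`‖(x_1,…,x_m)‖ = max_j ‖x_j‖` on `X^m` (which induces the product topology). -/
theorem function_calculus_continuous
    {X : Type*}
    [NormedAddCommGroup X] [Lattice X] [HasSolidNorm X] [IsOrderedAddMonoid X]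
    [NormedSpace ℝ X] [CompleteSpace X]
    -- the positively homogeneous continuous function calculus on `X`
    (Φ : ∀ m : ℕ, (Fin m → X) → ((Fin m → ℝ) → ℝ) → X)
    (hΦadd : ∀ (m) (x : Fin m → X) (h g), IsPHC h → IsPHC g →
      Φ m x (h + g) = Φ m x h + Φ m x g)
    (hΦsmul : ∀ (m) (x : Fin m → X) (c : ℝ) (h), IsPHC h → Φ m x (c • h) = c • Φ m x h)
    (hΦsup : ∀ (m) (x : Fin m → X) (h g), IsPHC h → IsPHC g →
      Φ m x (h ⊔ g) = Φ m x h ⊔ Φ m x g)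
    (hΦproj : ∀ (m) (x : Fin m → X) (k : Fin m), Φ m x (fun t => t k) = x k)
    {m : ℕ} (h : (Fin m → ℝ) → ℝ) (hh : IsPHC h) :
    Continuous (fun x : Fin m → X => Φ m x h) := by
  classical
  rcases Nat.eq_zero_or_pos m with hm | hm
  · subst hm
    have e : (fun x : Fin 0 → X => Φ 0 x h) = fun _ => Φ 0 (fun i => i.elim0) h :=
      funext fun x => by rw [Subsingleton.elim x fun i => i.elim0]
    rw [e]; exact continuous_const
  rw [continuous_iff_continuousAt]
  intro x₀
  rw [Metric.continuousAt_iff]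
  intro ε hε
  set σ : (Fin m → ℝ) → ℝ := fun t => ∑ j, |t j| with hσdef
  haveI : NeZero m := ⟨hm.ne'⟩
  have hσlat : LatP m σ := latp_sum_abs Finset.univ_nonempty
  set R : ℝ := (∑ j, ‖x₀ j‖) + m + 1 with hRdef
  have hsum0 : (0:ℝ) ≤ ∑ j, ‖x₀ j‖ := Finset.sum_nonneg fun j _ => norm_nonneg _
  have hR : 0 < R := by positivity
  set ε' : ℝ := ε / (3 * R) with hε'def
  have hε' : 0 < ε' := by positivity
  obtain ⟨p, hpLat, hp⟩ := approx hm h hh hε'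
  -- key estimate at any point with bounded coordinate sum
  have key : ∀ x : Fin m → X, (∑ j, ‖x j‖) ≤ R → ‖Φ m x h - Φ m x p‖ ≤ ε / 3 := by
    intro x hx
    have hpphc : IsPHC p := hpLat.isPHC
    have hdiff := Φ_sub Φ hΦadd hΦsmul x hh hpphc
    have hb : ∀ t, |(h + (-1 : ℝ) • p) t| ≤ (ε' • σ) t := fun t => by
      have := hp t
      simpa [Pi.add_apply, Pi.smul_apply, smul_eq_mul, neg_one_mul, sub_eq_add_neg] using this
    have hnorm := Φ_norm_le Φ hΦsmul hΦsup x (isPHC_add hh (isPHC_smul _ hpphc))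
      (isPHC_smul ε' hσlat.isPHC) hb
    rw [hdiff] at hnorm
    have hΦσ : Φ m x (ε' • σ) = ε' • Φ m x σ := hΦsmul m x ε' σ hσlat.isPHC
    have hσval : Φ m x σ = ∑ j, |x j| :=
      Φ_sum_abs Φ hΦadd hΦsmul hΦsup hΦproj x Finset.univ_nonempty
    calc ‖Φ m x h - Φ m x p‖ ≤ ‖Φ m x (ε' • σ)‖ := hnorm
      _ = ε' * ‖∑ j, |x j|‖ := by
          rw [hΦσ, hσval, norm_smul, Real.norm_eq_abs, abs_of_pos hε']
      _ ≤ ε' * ∑ j, ‖x j‖ := by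
          refine mul_le_mul_of_nonneg_left ?_ hε'.le
          refine (norm_sum_le _ _).trans (le_of_eq ?_)
          exact Finset.sum_congr rfl fun j _ => norm_abs_eq_norm _
      _ ≤ ε' * R := mul_le_mul_of_nonneg_left hx hε'.le
      _ = ε / 3 := by
          rw [hε'def]
          field_simp
  -- continuity of the lattice-polynomial part
  have hc := (Φ_latp_cont Φ hΦadd hΦsmul hΦsup hΦproj hpLat).continuousAt (x := x₀)
  rw [Metric.continuousAt_iff] at hc
  obtain ⟨δ₁, hδ₁, hδ⟩ := hc (ε / 3) (by positivity)
  refine ⟨min δ₁ 1, lt_min hδ₁ one_pos, fun {y} hy => ?_⟩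
  have hy1 : dist y x₀ < 1 := lt_of_lt_of_le hy (min_le_right _ _)
  have hyδ : dist y x₀ < δ₁ := lt_of_lt_of_le hy (min_le_left _ _)
  have hysum : (∑ j, ‖y j‖) ≤ R := by
    have hcoord : ∀ j, ‖y j‖ ≤ ‖x₀ j‖ + 1 := fun j => by
      have h1 : dist (y j) (x₀ j) ≤ dist y x₀ := dist_le_pi_dist y x₀ j
      have h2 : dist (y j) (x₀ j) < 1 := lt_of_le_of_lt h1 hy1
      have := norm_le_norm_add_norm_sub' (y j) (x₀ j)
      calc ‖y j‖ ≤ ‖x₀ j‖ + ‖y j - x₀ j‖ := by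
            have := norm_sub_norm_le (y j) (x₀ j)
            linarith [abs_le.mp (abs_norm_sub_norm_le (y j) (x₀ j))]
        _ ≤ ‖x₀ j‖ + 1 := by
            have : ‖y j - x₀ j‖ < 1 := by rwa [← dist_eq_norm]
            linarith
    calc (∑ j, ‖y j‖) ≤ ∑ j, (‖x₀ j‖ + 1) := Finset.sum_le_sum fun j _ => hcoord j
      _ = (∑ j, ‖x₀ j‖) + m := by rw [Finset.sum_add_distrib]; simp
      _ ≤ R := by rw [hRdef]; linarith
  have hx₀sum : (∑ j, ‖x₀ j‖) ≤ R := by rw [hRdef]; linarith [Nat.cast_nonneg (α := ℝ) m]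
  have t1 := key y hysum
  have t3 := key x₀ hx₀sum
  have t2 : dist (Φ m y p) (Φ m x₀ p) < ε / 3 := hδ hyδ
  have hsplit : Φ m y h - Φ m x₀ h
      = (Φ m y h - Φ m y p) + (Φ m y p - Φ m x₀ p) + (Φ m x₀ p - Φ m x₀ h) := by abel
  calc dist (Φ m y h) (Φ m x₀ h) = ‖Φ m y h - Φ m x₀ h‖ := dist_eq_norm _ _
    _ ≤ ‖Φ m y h - Φ m y p‖ + ‖Φ m y p - Φ m x₀ p‖ + ‖Φ m x₀ p - Φ m x₀ h‖ := by
        rw [hsplit]; exact norm_add₃_le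
    _ < ε / 3 + ε / 3 + ε / 3 := by
        have t2' : ‖Φ m y p - Φ m x₀ p‖ < ε / 3 := by rwa [← dist_eq_norm]
        have t3' : ‖Φ m x₀ p - Φ m x₀ h‖ ≤ ε / 3 := by rwa [norm_sub_rev]
        linarith
    _ = ε := by ring
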